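/- arXiv:1810.09009 — 2 statements merged into one kernel-verified Lean document; each statement's English description precedes it below -/
import Mathlib

section
/- Let J ⊂ {1,…,m} and let (x̄,σ̄) ∈ ℝⁿ × ℝᵐ satisfy A(σ̄)x̄ = b(σ̄), and for all j ∈ Jᶜ: σ̄_j ≤ 0, q_j(x̄) ≤ 0 and σ̄_j·q_j(x̄) = 0, and for all j ∈ J: q_j(x̄) = 0. Then (x̄,σ̄) ∈ X_J × (Y_col ∩ (−Γ_J)) and q₀(x̄) = L(x̄,σ̄) = D_L(σ̄). Moreover, if A(σ̄) is negative semidefinite, then σ̄ ∈ Y_col^{J−} and q₀(x̄) = sup_{x ∈ X_J} q₀(x) = L(x̄,σ̄) = inf_{σ ∈ Y_col^{J−}} D_L(σ) = D_L(σ̄); furthermore, if A(σ̄) is negative definite, then x̄ is the unique global maximizer of q₀ on X_J. -/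
open Matrix Set

noncomputable section

/-- The quadratic function `x ↦ ½⟨x, A x⟩ − ⟨b, x⟩ + c`. -/
def qf {n : ℕ} (A : Matrix (Fin n) (Fin n) ℝ) (b : Fin n → ℝ) (c : ℝ) (x : Fin n → ℝ) : ℝ :=
  (1 / 2 : ℝ) * (x ⬝ᵥ A.mulVec x) - b ⬝ᵥ x + c

/-- `A(σ) = A₀ + Σ σ_k A_k`. -/
def Amat {n m : ℕ} (A0 : Matrix (Fin n) (Fin n) ℝ) (A : Fin m → Matrix (Fin n) (Fin n) ℝ)
    (σ : Fin m → ℝ) : Matrix (Fin n) (Fin n) ℝ :=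
  A0 + ∑ k, σ k • A k

/-- `b(σ) = b₀ + Σ σ_k b_k`. -/
def bvec {n m : ℕ} (b0 : Fin n → ℝ) (b : Fin m → Fin n → ℝ) (σ : Fin m → ℝ) : Fin n → ℝ :=
  b0 + ∑ k, σ k • b k

/-- `q(x) = (q₁(x), …, q_m(x))`. -/
def qvec {n m : ℕ} (A : Fin m → Matrix (Fin n) (Fin n) ℝ) (b : Fin m → Fin n → ℝ)
    (c : Fin m → ℝ) (x : Fin n → ℝ) : Fin m → ℝ :=
  fun i => qf (A i) (b i) (c i) x

/-- Subdifferential of an (extended-real-valued) convex function represented by its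
finite part `V` and its effective domain `dV`; it is empty outside `dV`. -/
def subdiff {m : ℕ} (V : (Fin m → ℝ) → ℝ) (dV : Set (Fin m → ℝ)) (y : Fin m → ℝ) :
    Set (Fin m → ℝ) :=
  {σ | y ∈ dV ∧ ∀ y' ∈ dV, (y' - y) ⬝ᵥ σ ≤ V y' - V y}

/-- `V ∈ Γ(ℝᵐ)`: proper, convex and lower semicontinuous (closed epigraph), where the
extended-real-valued function is represented by its finite part `V` on its domain `dV`. -/
def properLscConvex {m : ℕ} (V : (Fin m → ℝ) → ℝ) (dV : Set (Fin m → ℝ)) : Prop :=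
  dV.Nonempty ∧ ConvexOn ℝ dV V ∧
    IsClosed {p : (Fin m → ℝ) × ℝ | p.1 ∈ dV ∧ V p.1 ≤ p.2}

/-- `(Vs, dVs)` is the Fenchel conjugate of `(V, dV)`:
`dVs` is the set where the supremum is finite and `Vs` its value there. -/
def isConjugate {m : ℕ} (V : (Fin m → ℝ) → ℝ) (dV : Set (Fin m → ℝ))
    (Vs : (Fin m → ℝ) → ℝ) (dVs : Set (Fin m → ℝ)) : Prop :=
  dVs = {σ | BddAbove ((fun y => y ⬝ᵥ σ - V y) '' dV)} ∧
    ∀ σ ∈ dVs, Vs σ = sSup ((fun y => y ⬝ᵥ σ - V y) '' dV)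

/-- The continuous linear functional `v ↦ ⟨g, v⟩`. -/
def dotCLM {k : ℕ} (g : Fin k → ℝ) : (Fin k → ℝ) →L[ℝ] ℝ :=
  LinearMap.toContinuousLinearMap
    { toFun := fun v => g ⬝ᵥ v
      map_add' := fun u v => by simp [dotProduct_add]
      map_smul' := fun t v => by simp [dotProduct_smul, smul_eq_mul] }

/-- The continuous linear map `v ↦ M v`. -/
def matCLM {k l : ℕ} (M : Matrix (Fin l) (Fin k) ℝ) : (Fin k → ℝ) →L[ℝ] (Fin l → ℝ) :=
  LinearMap.toContinuousLinearMap M.mulVecLin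

lemma dot_sum {n : ℕ} {ι : Type*} (s : Finset ι) (v : Fin n → ℝ) (w : ι → Fin n → ℝ) :
    v ⬝ᵥ ∑ k ∈ s, w k = ∑ k ∈ s, v ⬝ᵥ w k := by
  induction s using Finset.cons_induction with
  | empty => simp
  | cons a s ha ih => simp [Finset.sum_cons, dotProduct_add, ih]
lemma sum_dot {n : ℕ} {ι : Type*} (s : Finset ι) (v : Fin n → ℝ) (w : ι → Fin n → ℝ) :
    (∑ k ∈ s, w k) ⬝ᵥ v = ∑ k ∈ s, w k ⬝ᵥ v := by
  induction s using Finset.cons_induction with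
  | empty => simp
  | cons a s ha ih => simp [Finset.sum_cons, add_dotProduct, ih]
lemma sum_mulVec' {n : ℕ} {ι : Type*} (s : Finset ι) (M : ι → Matrix (Fin n) (Fin n) ℝ)
    (x : Fin n → ℝ) : (∑ k ∈ s, M k) *ᵥ x = ∑ k ∈ s, M k *ᵥ x := by
  induction s using Finset.cons_induction with
  | empty => simp
  | cons a s ha ih => simp [Finset.sum_cons, Matrix.add_mulVec, ih]

lemma sdot {n : ℕ} {M : Matrix (Fin n) (Fin n) ℝ} (hM : M.IsSymm) (x y : Fin n → ℝ) :
    x ⬝ᵥ M *ᵥ y = y ⬝ᵥ M *ᵥ x := by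
  rw [Matrix.dotProduct_mulVec, ← Matrix.mulVec_transpose, hM, dotProduct_comm]

lemma quad_diff {n : ℕ} {M : Matrix (Fin n) (Fin n) ℝ} (hM : M.IsSymm)
    {β : Fin n → ℝ} {xb : Fin n → ℝ} (hx : M *ᵥ xb = β) (γ : ℝ) (x : Fin n → ℝ) :
    qf M β γ x = qf M β γ xb + (1/2 : ℝ) * ((x - xb) ⬝ᵥ M *ᵥ (x - xb)) := by
  have h1 : β ⬝ᵥ x = xb ⬝ᵥ M *ᵥ x := by rw [← hx, dotProduct_comm, sdot hM]
  have h2 : β ⬝ᵥ xb = xb ⬝ᵥ M *ᵥ xb := by rw [← hx, dotProduct_comm, sdot hM]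
  have h3 : x ⬝ᵥ M *ᵥ xb = xb ⬝ᵥ M *ᵥ x := sdot hM x xb
  simp only [qf, Matrix.mulVec_sub, sub_dotProduct, dotProduct_sub, h1, h2, h3]
  ring

lemma amat_symm {n m : ℕ} {A0 : Matrix (Fin n) (Fin n) ℝ} {A : Fin m → Matrix (Fin n) (Fin n) ℝ}
    (hA0 : A0.IsSymm) (hA : ∀ i, (A i).IsSymm) (σ : Fin m → ℝ) : (Amat A0 A σ).IsSymm := by
  unfold Amat Matrix.IsSymm
  rw [Matrix.transpose_add, Matrix.transpose_sum, hA0]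
  congr 1
  refine Finset.sum_congr rfl fun k _ => ?_
  rw [Matrix.transpose_smul, hA k]

lemma lag_eq {n m : ℕ} (A0 : Matrix (Fin n) (Fin n) ℝ) (A : Fin m → Matrix (Fin n) (Fin n) ℝ)
    (b0 : Fin n → ℝ) (b : Fin m → Fin n → ℝ) (c : Fin m → ℝ) (σ : Fin m → ℝ) (x : Fin n → ℝ) :
    qf A0 b0 0 x + qvec A b c x ⬝ᵥ σ = qf (Amat A0 A σ) (bvec b0 b σ) (σ ⬝ᵥ c) x := by
  have hS : x ⬝ᵥ (∑ k, σ k • A k) *ᵥ x = ∑ k, σ k * (x ⬝ᵥ (A k) *ᵥ x) := by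
    rw [sum_mulVec', dot_sum]
    exact Finset.sum_congr rfl fun k _ => by
      rw [Matrix.smul_mulVec, dotProduct_smul, smul_eq_mul]
  have hB : (∑ k, σ k • b k) ⬝ᵥ x = ∑ k, σ k * (b k ⬝ᵥ x) := by
    rw [sum_dot]
    exact Finset.sum_congr rfl fun k _ => by rw [smul_dotProduct, smul_eq_mul]
  unfold qf Amat bvec
  rw [Matrix.add_mulVec, dotProduct_add, hS, add_dotProduct, hB]
  have hq : qvec A b c x ⬝ᵥ σ = ∑ k, ((1/2:ℝ)*(x ⬝ᵥ (A k) *ᵥ x) - b k ⬝ᵥ x + c k) * σ k := rfl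
  have hc : σ ⬝ᵥ c = ∑ k, σ k * c k := rfl
  rw [hq, hc,
    show ∑ k, ((1/2:ℝ)*(x ⬝ᵥ (A k) *ᵥ x) - b k ⬝ᵥ x + c k) * σ k
      = ∑ k, ((1/2:ℝ)*(σ k * (x ⬝ᵥ (A k) *ᵥ x)) - σ k * (b k ⬝ᵥ x) + σ k * c k) from
      Finset.sum_congr rfl fun k _ => by ring,
    Finset.sum_add_distrib, Finset.sum_sub_distrib, ← Finset.mul_sum]
  ring

lemma qdot_nonneg {n m : ℕ} (A : Fin m → Matrix (Fin n) (Fin n) ℝ) (b : Fin m → Fin n → ℝ)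
    (c : Fin m → ℝ) (J : Set (Fin m)) (σ : Fin m → ℝ) (x : Fin n → ℝ)
    (h1 : ∀ j ∈ J, qf (A j) (b j) (c j) x = 0)
    (h2 : ∀ j ∉ J, σ j ≤ 0 ∧ qf (A j) (b j) (c j) x ≤ 0) :
    0 ≤ qvec A b c x ⬝ᵥ σ := by
  rw [dotProduct]
  refine Finset.sum_nonneg fun j _ => ?_
  by_cases hj : j ∈ J
  · simp [qvec, h1 j hj]
  · have ha := (h2 j hj).1
    have hb := (h2 j hj).2
    simp only [qvec]
    nlinarith

lemma psd_dot {n : ℕ} {M : Matrix (Fin n) (Fin n) ℝ} (h : (-M).PosSemidef) (v : Fin n → ℝ) :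
    v ⬝ᵥ M *ᵥ v ≤ 0 := by
  have := h.dotProduct_mulVec_nonneg v
  simp only [star_trivial, Matrix.neg_mulVec, dotProduct_neg] at this
  linarith

lemma pd_dot {n : ℕ} {M : Matrix (Fin n) (Fin n) ℝ} (h : (-M).PosDef) {v : Fin n → ℝ}
    (hv : v ≠ 0) : v ⬝ᵥ M *ᵥ v < 0 := by
  have := h.dotProduct_mulVec_pos hv
  simp only [star_trivial, Matrix.neg_mulVec, dotProduct_neg] at this
  linarith


/-- The "max" variant of Statement 7: if `(x̄,σ̄)` satisfies the KKT-type
conditions with `σ̄_j ≤ 0` on `Jᶜ`, then `(x̄,σ̄) ∈ X_J × (Y_col ∩ (−Γ_J))` and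
`q₀(x̄) = L(x̄,σ̄) = D_L(σ̄)`; if `A(σ̄) ⪯ 0`, then `σ̄ ∈ Y_col^{J−}` and
`q₀(x̄) = sup_{X_J} q₀ = L(x̄,σ̄) = inf_{Y_col^{J−}} D_L = D_L(σ̄)`; if `A(σ̄) ≺ 0`, then
`x̄` is the unique global maximizer of `q₀` on `X_J`. -/
theorem statement8 {n m : ℕ}
    (A0 : Matrix (Fin n) (Fin n) ℝ) (A : Fin m → Matrix (Fin n) (Fin n) ℝ)
    (b0 : Fin n → ℝ) (b : Fin m → Fin n → ℝ) (c : Fin m → ℝ)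
    (hA0 : A0.IsSymm) (hA : ∀ i, (A i).IsSymm)
    (J : Set (Fin m))
    (DL : (Fin m → ℝ) → ℝ)
    (hDL : ∀ σ, bvec b0 b σ ∈ Set.range (Amat A0 A σ).mulVec →
      ∀ x, Amat A0 A σ *ᵥ x = bvec b0 b σ →
        DL σ = qf A0 b0 0 x + qvec A b c x ⬝ᵥ σ)
    (xb : Fin n → ℝ) (σb : Fin m → ℝ)
    (hstat : Amat A0 A σb *ᵥ xb = bvec b0 b σb)
    (hJc : ∀ j ∉ J, σb j ≤ 0 ∧ qf (A j) (b j) (c j) xb ≤ 0 ∧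
      σb j * qf (A j) (b j) (c j) xb = 0)
    (hJ : ∀ j ∈ J, qf (A j) (b j) (c j) xb = 0) :
    xb ∈ {x | (∀ j ∈ J, qf (A j) (b j) (c j) x = 0) ∧
        ∀ j ∉ J, qf (A j) (b j) (c j) x ≤ 0} ∧
    σb ∈ {σ | (∀ j ∉ J, σ j ≤ 0) ∧ bvec b0 b σ ∈ Set.range (Amat A0 A σ).mulVec} ∧
    qf A0 b0 0 xb = qf A0 b0 0 xb + qvec A b c xb ⬝ᵥ σb ∧
    qf A0 b0 0 xb + qvec A b c xb ⬝ᵥ σb = DL σb ∧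
    ((-(Amat A0 A σb)).PosSemidef →
      (∀ x, ((∀ j ∈ J, qf (A j) (b j) (c j) x = 0) ∧
          ∀ j ∉ J, qf (A j) (b j) (c j) x ≤ 0) →
        qf A0 b0 0 x ≤ qf A0 b0 0 xb) ∧
      (∀ σ, (∀ j ∉ J, σ j ≤ 0) → bvec b0 b σ ∈ Set.range (Amat A0 A σ).mulVec →
        (-(Amat A0 A σ)).PosSemidef → DL σb ≤ DL σ) ∧
      ((-(Amat A0 A σb)).PosDef →
        ∀ x, ((∀ j ∈ J, qf (A j) (b j) (c j) x = 0) ∧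
            ∀ j ∉ J, qf (A j) (b j) (c j) x ≤ 0) →
          x ≠ xb → qf A0 b0 0 x < qf A0 b0 0 xb)) := by
  -- the complementary-slackness dot product vanishes
  have hdot0 : qvec A b c xb ⬝ᵥ σb = 0 := by
    rw [dotProduct]
    refine Finset.sum_eq_zero fun j _ => ?_
    by_cases hj : j ∈ J
    · simp [qvec, hJ j hj]
    · have := (hJc j hj).2.2
      simpa [qvec, mul_comm] using this
  have eq1 : qf A0 b0 0 xb = qf A0 b0 0 xb + qvec A b c xb ⬝ᵥ σb := by
    rw [hdot0, add_zero]
  have eq2 : qf A0 b0 0 xb + qvec A b c xb ⬝ᵥ σb = DL σb :=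
    (hDL σb ⟨xb, hstat⟩ xb hstat).symm
  refine ⟨⟨hJ, fun j hj => (hJc j hj).2.1⟩, ⟨fun j hj => (hJc j hj).1, ⟨xb, hstat⟩⟩,
    eq1, eq2, fun hpsd => ?_⟩
  have hsym := amat_symm hA0 hA σb
  -- key estimate for the primal side
  have key : ∀ x, ((∀ j ∈ J, qf (A j) (b j) (c j) x = 0) ∧
      ∀ j ∉ J, qf (A j) (b j) (c j) x ≤ 0) →
      qf A0 b0 0 x ≤ qf A0 b0 0 xb + (1/2 : ℝ) * ((x - xb) ⬝ᵥ Amat A0 A σb *ᵥ (x - xb)) := by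
    intro x hxX
    have h1 : qf A0 b0 0 x ≤ qf A0 b0 0 x + qvec A b c x ⬝ᵥ σb := by
      have := qdot_nonneg A b c J σb x hxX.1 (fun j hj => ⟨(hJc j hj).1, hxX.2 j hj⟩)
      linarith
    calc qf A0 b0 0 x ≤ qf A0 b0 0 x + qvec A b c x ⬝ᵥ σb := h1
      _ = qf (Amat A0 A σb) (bvec b0 b σb) (σb ⬝ᵥ c) x := lag_eq A0 A b0 b c σb x
      _ = qf (Amat A0 A σb) (bvec b0 b σb) (σb ⬝ᵥ c) xb
          + (1/2 : ℝ) * ((x - xb) ⬝ᵥ Amat A0 A σb *ᵥ (x - xb)) := quad_diff hsym hstat _ x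
      _ = (qf A0 b0 0 xb + qvec A b c xb ⬝ᵥ σb)
          + (1/2 : ℝ) * ((x - xb) ⬝ᵥ Amat A0 A σb *ᵥ (x - xb)) := by
            rw [lag_eq A0 A b0 b c σb xb]
      _ = qf A0 b0 0 xb + (1/2 : ℝ) * ((x - xb) ⬝ᵥ Amat A0 A σb *ᵥ (x - xb)) := by
            rw [hdot0, add_zero]
  refine ⟨fun x hxX => ?_, fun σ hσneg hmem hpsdσ => ?_, fun hpd x hxX hne => ?_⟩
  · have := psd_dot hpsd (x - xb)
    have := key x hxX
    linarith
  · obtain ⟨x', hx'⟩ := hmem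
    have hsymσ := amat_symm hA0 hA σ
    have hDLσ : DL σ = qf (Amat A0 A σ) (bvec b0 b σ) (σ ⬝ᵥ c) x' := by
      rw [hDL σ ⟨x', hx'⟩ x' hx', lag_eq]
    have hq : qf (Amat A0 A σ) (bvec b0 b σ) (σ ⬝ᵥ c) xb
        = qf (Amat A0 A σ) (bvec b0 b σ) (σ ⬝ᵥ c) x'
          + (1/2 : ℝ) * ((xb - x') ⬝ᵥ Amat A0 A σ *ᵥ (xb - x')) := quad_diff hsymσ hx' _ xb
    have hquad : (xb - x') ⬝ᵥ Amat A0 A σ *ᵥ (xb - x') ≤ 0 := psd_dot hpsdσ _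
    have hlow : qf A0 b0 0 xb ≤ qf (Amat A0 A σ) (bvec b0 b σ) (σ ⬝ᵥ c) xb := by
      rw [← lag_eq A0 A b0 b c σ xb]
      have := qdot_nonneg A b c J σ xb hJ (fun j hj => ⟨hσneg j hj, (hJc j hj).2.1⟩)
      linarith
    have hDLσb : DL σb = qf A0 b0 0 xb := by rw [← eq2, ← eq1]
    rw [hDLσb, hDLσ]
    linarith
  · have hquad : (x - xb) ⬝ᵥ Amat A0 A σb *ᵥ (x - xb) < 0 :=
      pd_dot hpd (sub_ne_zero.mpr hne)
    have := key x hxX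
    linarith
end
end

section
/- Let (x̄,σ̄) ∈ ℝⁿ × ℝᵐ be a critical point of the Lagrangian L, i.e., A(σ̄)x̄ = b(σ̄) and q_j(x̄) = 0 for all j = 1,…,m. Then x̄ ∈ X_e, σ̄ ∈ Y_col, and q₀(x̄) = L(x̄,σ̄) = D_L(σ̄). Moreover: if A(σ̄) is positive semidefinite, then σ̄ ∈ Y_col⁺ and q₀(x̄) = inf_{x ∈ X_e} q₀(x) = L(x̄,σ̄) = sup_{σ ∈ Y_col⁺} D_L(σ) = D_L(σ̄); if A(σ̄) is negative semidefinite, then σ̄ ∈ Y_col⁻ and q₀(x̄) = sup_{x ∈ X_e} q₀(x) = L(x̄,σ̄) = inf_{σ ∈ Y_col⁻} D_L(σ) = D_L(σ̄). -/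
open Matrix Set

noncomputable section

lemma symm_dot {n : ℕ} (M : Matrix (Fin n) (Fin n) ℝ) (hM : M.IsSymm)
    (x y : Fin n → ℝ) : x ⬝ᵥ M *ᵥ y = y ⬝ᵥ M *ᵥ x := by
  rw [Matrix.dotProduct_mulVec, ← Matrix.mulVec_transpose, hM.eq, dotProduct_comm]

lemma Amat_symm {n m : ℕ} (A0 : Matrix (Fin n) (Fin n) ℝ)
    (A : Fin m → Matrix (Fin n) (Fin n) ℝ) (hA0 : A0.IsSymm) (hA : ∀ i, (A i).IsSymm)
    (σ : Fin m → ℝ) : (Amat A0 A σ).IsSymm := by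
  unfold Matrix.IsSymm Amat
  rw [Matrix.transpose_add, Matrix.transpose_sum, hA0.eq]
  congr 1
  exact Finset.sum_congr rfl fun i _ => by rw [Matrix.transpose_smul, (hA i).eq]

lemma quad_expand {n : ℕ} (M : Matrix (Fin n) (Fin n) ℝ) (hM : M.IsSymm)
    (bb x y : Fin n → ℝ) (hx : M *ᵥ x = bb) (cc : ℝ) :
    qf M bb cc y - qf M bb cc x = (1/2 : ℝ) * ((y - x) ⬝ᵥ M *ᵥ (y - x)) := by
  subst hx
  have h := symm_dot M hM x y
  have h2 : (M *ᵥ x) ⬝ᵥ y = y ⬝ᵥ M *ᵥ x := dotProduct_comm _ _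
  have h3 : (M *ᵥ x) ⬝ᵥ x = x ⬝ᵥ M *ᵥ x := dotProduct_comm _ _
  simp only [qf, Matrix.mulVec_sub, dotProduct_sub, sub_dotProduct]
  linarith

lemma qf_add {n : ℕ} (M N : Matrix (Fin n) (Fin n) ℝ) (v w : Fin n → ℝ) (d e : ℝ)
    (x : Fin n → ℝ) : qf (M + N) (v + w) (d + e) x = qf M v d x + qf N w e x := by
  simp only [qf, Matrix.add_mulVec, dotProduct_add, add_dotProduct]
  ring

lemma qf_smul {n : ℕ} (N : Matrix (Fin n) (Fin n) ℝ) (w : Fin n → ℝ) (e : ℝ) (t : ℝ)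
    (x : Fin n → ℝ) : qf (t • N) (t • w) (t * e) x = t * qf N w e x := by
  simp only [qf, Matrix.smul_mulVec, dotProduct_smul, smul_dotProduct,
    smul_eq_mul]
  ring

lemma qf_sum {n m : ℕ} (A : Fin m → Matrix (Fin n) (Fin n) ℝ) (b : Fin m → Fin n → ℝ)
    (c : Fin m → ℝ) (σ : Fin m → ℝ) (x : Fin n → ℝ) (s : Finset (Fin m)) :
    qf (∑ k ∈ s, σ k • A k) (∑ k ∈ s, σ k • b k) (∑ k ∈ s, σ k * c k) x
      = ∑ k ∈ s, σ k * qf (A k) (b k) (c k) x := by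
  induction s using Finset.induction with
  | empty => simp [qf]
  | insert _ _ h ih =>
    rw [Finset.sum_insert h, Finset.sum_insert h, Finset.sum_insert h, Finset.sum_insert h,
      qf_add, qf_smul, ih]

lemma L_eq {n m : ℕ} (A0 : Matrix (Fin n) (Fin n) ℝ) (A : Fin m → Matrix (Fin n) (Fin n) ℝ)
    (b0 : Fin n → ℝ) (b : Fin m → Fin n → ℝ) (c : Fin m → ℝ) (σ : Fin m → ℝ) (x : Fin n → ℝ) :
    qf A0 b0 0 x + qvec A b c x ⬝ᵥ σ = qf (Amat A0 A σ) (bvec b0 b σ) (c ⬝ᵥ σ) x := by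
  have hc : c ⬝ᵥ σ = 0 + ∑ k, σ k * c k := by
    simp [dotProduct, mul_comm]
  have hq : qvec A b c x ⬝ᵥ σ = ∑ k, σ k * qf (A k) (b k) (c k) x := by
    simp [qvec, dotProduct, mul_comm]
  rw [Amat, bvec, hc, hq, qf_add, qf_sum]
/-- If `(x̄,σ̄)` is a critical point of the Lagrangian `L` (i.e.
`A(σ̄)x̄ = b(σ̄)` and `q(x̄) = 0`), then `x̄ ∈ X_e`, `σ̄ ∈ Y_col` and
`q₀(x̄) = L(x̄,σ̄) = D_L(σ̄)`; if `A(σ̄) ⪰ 0` then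
`q₀(x̄) = inf_{X_e} q₀ = sup_{Y_col⁺} D_L = D_L(σ̄)`, and if `A(σ̄) ⪯ 0` then
`q₀(x̄) = sup_{X_e} q₀ = inf_{Y_col⁻} D_L = D_L(σ̄)`. -/
theorem statement9 {n m : ℕ}
    (A0 : Matrix (Fin n) (Fin n) ℝ) (A : Fin m → Matrix (Fin n) (Fin n) ℝ)
    (b0 : Fin n → ℝ) (b : Fin m → Fin n → ℝ) (c : Fin m → ℝ)
    (hA0 : A0.IsSymm) (hA : ∀ i, (A i).IsSymm)
    (DL : (Fin m → ℝ) → ℝ)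
    (hDL : ∀ σ, bvec b0 b σ ∈ Set.range (Amat A0 A σ).mulVec →
      ∀ x, Amat A0 A σ *ᵥ x = bvec b0 b σ →
        DL σ = qf A0 b0 0 x + qvec A b c x ⬝ᵥ σ)
    (xb : Fin n → ℝ) (σb : Fin m → ℝ)
    (hstat : Amat A0 A σb *ᵥ xb = bvec b0 b σb)
    (hq0 : ∀ j, qf (A j) (b j) (c j) xb = 0) :
    xb ∈ {x | ∀ j, qf (A j) (b j) (c j) x = 0} ∧
    bvec b0 b σb ∈ Set.range (Amat A0 A σb).mulVec ∧
    qf A0 b0 0 xb = qf A0 b0 0 xb + qvec A b c xb ⬝ᵥ σb ∧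
    qf A0 b0 0 xb + qvec A b c xb ⬝ᵥ σb = DL σb ∧
    ((Amat A0 A σb).PosSemidef →
      (∀ x, (∀ j, qf (A j) (b j) (c j) x = 0) → qf A0 b0 0 xb ≤ qf A0 b0 0 x) ∧
      (∀ σ, bvec b0 b σ ∈ Set.range (Amat A0 A σ).mulVec →
        (Amat A0 A σ).PosSemidef → DL σ ≤ DL σb)) ∧
    ((-(Amat A0 A σb)).PosSemidef →
      (∀ x, (∀ j, qf (A j) (b j) (c j) x = 0) → qf A0 b0 0 x ≤ qf A0 b0 0 xb) ∧
      (∀ σ, bvec b0 b σ ∈ Set.range (Amat A0 A σ).mulVec →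
        (-(Amat A0 A σ)).PosSemidef → DL σb ≤ DL σ)) := by

  have hsym : ∀ σ, (Amat A0 A σ).IsSymm := Amat_symm A0 A hA0 hA
  have hq0v : qvec A b c xb = 0 := funext hq0
  have hdotb : ∀ σ : Fin m → ℝ, qvec A b c xb ⬝ᵥ σ = 0 := by
    intro σ; rw [hq0v]; simp
  refine ⟨hq0, ⟨xb, hstat⟩, by rw [hdotb σb, add_zero], (hDL σb ⟨xb, hstat⟩ xb hstat).symm, ?_, ?_⟩
  · intro hpsd
    constructor
    · intro x hx
      have hxv : qvec A b c x ⬝ᵥ σb = 0 := by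
        have : qvec A b c x = 0 := funext hx
        rw [this]; simp
      have h1 := L_eq A0 A b0 b c σb x
      have h2 := L_eq A0 A b0 b c σb xb
      have h3 := quad_expand (Amat A0 A σb) (hsym σb) (bvec b0 b σb) xb x hstat (c ⬝ᵥ σb)
      have h4 : (0:ℝ) ≤ (x - xb) ⬝ᵥ (Amat A0 A σb) *ᵥ (x - xb) := by
        have := hpsd.dotProduct_mulVec_nonneg (x - xb); simpa using this
      have h5 := hdotb σb
      linarith
    · intro σ hσim hσpsd
      obtain ⟨x, hxeq⟩ := hσim
      have hD := hDL σ ⟨x, hxeq⟩ x hxeq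
      have hDb := hDL σb ⟨xb, hstat⟩ xb hstat
      have h1 := L_eq A0 A b0 b c σ x
      have h2 := L_eq A0 A b0 b c σ xb
      have h3 := quad_expand (Amat A0 A σ) (hsym σ) (bvec b0 b σ) x xb hxeq (c ⬝ᵥ σ)
      have h4 : (0:ℝ) ≤ (xb - x) ⬝ᵥ (Amat A0 A σ) *ᵥ (xb - x) := by
        have := hσpsd.dotProduct_mulVec_nonneg (xb - x); simpa using this
      have h5 := hdotb σ
      have h6 := hdotb σb
      linarith
  · intro hneg
    constructor
    · intro x hx
      have hxv : qvec A b c x ⬝ᵥ σb = 0 := by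
        have : qvec A b c x = 0 := funext hx
        rw [this]; simp
      have h1 := L_eq A0 A b0 b c σb x
      have h2 := L_eq A0 A b0 b c σb xb
      have h3 := quad_expand (Amat A0 A σb) (hsym σb) (bvec b0 b σb) xb x hstat (c ⬝ᵥ σb)
      have h4 : (x - xb) ⬝ᵥ (Amat A0 A σb) *ᵥ (x - xb) ≤ 0 := by
        have := hneg.dotProduct_mulVec_nonneg (x - xb)
        simp only [Matrix.neg_mulVec, dotProduct_neg, star_trivial] at this
        linarith
      have h5 := hdotb σb
      linarith
    · intro σ hσim hσneg
      obtain ⟨x, hxeq⟩ := hσim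
      have hD := hDL σ ⟨x, hxeq⟩ x hxeq
      have hDb := hDL σb ⟨xb, hstat⟩ xb hstat
      have h1 := L_eq A0 A b0 b c σ x
      have h2 := L_eq A0 A b0 b c σ xb
      have h3 := quad_expand (Amat A0 A σ) (hsym σ) (bvec b0 b σ) x xb hxeq (c ⬝ᵥ σ)
      have h4 : (xb - x) ⬝ᵥ (Amat A0 A σ) *ᵥ (xb - x) ≤ 0 := by
        have := hσneg.dotProduct_mulVec_nonneg (xb - x)
        simp only [Matrix.neg_mulVec, dotProduct_neg, star_trivial] at this
        linarith
      have h5 := hdotb σ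
      have h6 := hdotb σb
      linarith
end
end
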